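/- arXiv:1309.3292 — 3 statements merged into one kernel-verified Lean document; each statement's English description precedes it below -/
import Mathlib

section
/- Let K be a commutative ring, n a natural number, W' an n×n matrix over K, and w₀ ∈ K. Let W be the (n+1)×(n+1) matrix whose first row and first column have all entries equal to w₀ and whose remaining n×n block is W'. Then det W = w₀ · det(W' − w₀·J), where J is the n×n all-ones matrix. -/
/-- if the `(n+1)×(n+1)` matrix `W` has all entries of its first
row and first column equal to `w₀` and remaining `n×n` block `W'`, then
`det W = w₀ · det (W' − w₀ · J)`, `J` the all-ones matrix. -/
theorem stmt6 (K : Type) [CommRing K] (n : ℕ)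
    (W' : Matrix (Fin n) (Fin n) K) (w₀ : K)
    (W : Matrix (Fin (n + 1)) (Fin (n + 1)) K)
    (hrow : ∀ j, W 0 j = w₀) (hcol : ∀ i, W i 0 = w₀)
    (hblock : ∀ i j : Fin n, W i.succ j.succ = W' i j) :
    W.det = w₀ * (W' - w₀ • Matrix.of (fun _ _ => (1 : K))).det := by
  classical
  set M : Matrix (Fin (n + 1)) (Fin (n + 1)) K :=
    Matrix.of (fun i j => if i = 0 then W 0 j else W i j - W 0 j) with hM
  set L : Matrix (Fin (n + 1)) (Fin (n + 1)) K :=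
    Matrix.of (fun i j => if j = 0 then 1 else if i = j then (1 : K) else 0) with hL
  have hLM : L * M = W := by
    ext i j
    simp only [Matrix.mul_apply, hL, hM, Matrix.of_apply]
    rcases eq_or_ne i 0 with rfl | hi
    · rw [Finset.sum_eq_single (0 : Fin (n + 1))]
      · simp
      · intro b _ hb; simp [hb, Ne.symm hb]
      · simp
    · rw [Finset.sum_eq_add_of_mem (0 : Fin (n + 1)) i (Finset.mem_univ _)
        (Finset.mem_univ _) (Ne.symm hi)]
      · simp [hi]
      · intro c _ hc
        simp [hc.1, hc.2, Ne.symm hc.2]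
  have hdetL : L.det = 1 := by
    rw [Matrix.det_of_lowerTriangular L]
    · simp [hL]
    · intro i j hij
      have hij2 : i < j := hij
      have hj : j ≠ 0 := by
        intro h
        subst h
        exact absurd (Fin.zero_le i) (not_le.mpr hij2)
      have hij' : i ≠ j := ne_of_lt hij2
      simp [hL, hj, hij']
  have hdetM : M.det = w₀ * (W' - w₀ • Matrix.of (fun _ _ => (1 : K))).det := by
    rw [Matrix.det_succ_column_zero]
    rw [Finset.sum_eq_single (0 : Fin (n + 1))]
    · have : (M.submatrix (Fin.succAbove 0) Fin.succ)
          = W' - w₀ • Matrix.of (fun _ _ => (1 : K)) := by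
        ext i j
        simp [hM, Matrix.submatrix_apply, Fin.succ_ne_zero, hblock, hrow, Matrix.smul_apply]
      rw [this]
      simp [hM, hrow, hcol]
    · intro b _ hb
      have : M b 0 = 0 := by simp [hM, hb, hcol, hrow]
      simp [this]
    · simp
  rw [← hLM, Matrix.det_mul, hdetL, one_mul, hdetM]
end

section
/- Let R be a finite principal ideal ring (every left ideal and every right ideal of R is principal). For a left ideal L of R let L^⊥ = {y ∈ R : ay = 0 for all a ∈ L} denote its right annihilator, a right ideal. Let μ be the Möbius function of the finite lattice of right ideals of R. Define the matrix T, with rows indexed by left ideals and columns indexed by right ideals of R, by T(L, J) = 1 if J ≤ L^⊥ and T(L, J) = 0 otherwise, and define the matrix Q, with rows indexed by right ideals and columns indexed by left ideals, by Q(J, L) = μ(L^⊥, J). Then T·Q is the identity matrix indexed by the left ideals of R. -/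
open scoped Classical

/-- The right annihilator `L^⊥ = {y ∈ R : ay = 0 for all a ∈ L}` of a left
ideal `L`, as a right ideal (a submodule of `R` over `Rᵐᵒᵖ`). -/
def rAnn (R : Type) [Ring R] (L : Submodule R R) : Submodule Rᵐᵒᵖ R where
  carrier := {y : R | ∀ a ∈ L, a * y = 0}
  zero_mem' := fun a _ => mul_zero a
  add_mem' := by
    intro y z hy hz a ha
    rw [mul_add, hy a ha, hz a ha, add_zero]
  smul_mem' := by
    intro c y hy a ha
    rw [MulOpposite.smul_eq_mul_unop, ← mul_assoc, hy a ha, zero_mul]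

noncomputable instance (R : Type) [Ring R] [Fintype R] :
    Fintype (Submodule R R) := Fintype.ofFinite _

noncomputable instance (R : Type) [Ring R] [Fintype R] :
    Fintype (Submodule Rᵐᵒᵖ R) := Fintype.ofFinite _

/-- The left annihilator of a right ideal, as a left ideal. -/
def lAnn (R : Type) [Ring R] (J : Submodule Rᵐᵒᵖ R) : Submodule R R where
  carrier := {x : R | ∀ y ∈ J, x * y = 0}
  zero_mem' := fun y _ => zero_mul y
  add_mem' := by
    intro a b ha hb y hy
    rw [add_mul, ha y hy, hb y hy, add_zero]
  smul_mem' := by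
    intro c x hx y hy
    rw [smul_eq_mul, mul_assoc, hx y hy, mul_zero]

namespace Stmt7Aux

variable {R : Type} [Ring R]

lemma mem_rAnn {L : Submodule R R} {y : R} : y ∈ rAnn R L ↔ ∀ a ∈ L, a * y = 0 := Iff.rfl

lemma mem_lAnn {J : Submodule Rᵐᵒᵖ R} {x : R} : x ∈ lAnn R J ↔ ∀ y ∈ J, x * y = 0 := Iff.rfl

lemma mem_rAnn_span {c y : R} :
    y ∈ rAnn R (Submodule.span R {c}) ↔ c * y = 0 := by
  constructor
  · intro h; exact h c (Submodule.mem_span_singleton_self c)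
  · intro h a ha
    obtain ⟨t, rfl⟩ := Submodule.mem_span_singleton.mp ha
    rw [smul_eq_mul, mul_assoc, h, mul_zero]

lemma mem_lAnn_span {c x : R} :
    x ∈ lAnn R (Submodule.span Rᵐᵒᵖ {c}) ↔ x * c = 0 := by
  constructor
  · intro h; exact h c (Submodule.mem_span_singleton_self c)
  · intro h y hy
    obtain ⟨t, rfl⟩ := Submodule.mem_span_singleton.mp hy
    rw [MulOpposite.smul_eq_mul_unop, ← mul_assoc, h, zero_mul]

lemma rAnn_antitone {L M : Submodule R R} (h : L ≤ M) : rAnn R M ≤ rAnn R L :=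
  fun y hy a ha => hy a (h ha)

lemma lAnn_antitone {J K : Submodule Rᵐᵒᵖ R} (h : J ≤ K) : lAnn R K ≤ lAnn R J :=
  fun x hx y hy => hx y (h hy)

lemma le_lAnn_rAnn {L : Submodule R R} : L ≤ lAnn R (rAnn R L) :=
  fun x hx y hy => hy x hx

lemma le_rAnn_lAnn {J : Submodule Rᵐᵒᵖ R} : J ≤ rAnn R (lAnn R J) :=
  fun y hy a ha => ha y hy

lemma rAnn_lAnn_rAnn {L : Submodule R R} :
    rAnn R (lAnn R (rAnn R L)) = rAnn R L :=
  le_antisymm (rAnn_antitone le_lAnn_rAnn) le_rAnn_lAnn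

lemma lAnn_rAnn_lAnn {J : Submodule Rᵐᵒᵖ R} :
    lAnn R (rAnn R (lAnn R J)) = lAnn R J :=
  le_antisymm (lAnn_antitone le_rAnn_lAnn) le_lAnn_rAnn

lemma rAnn_top : rAnn R (⊤ : Submodule R R) = ⊥ := by
  ext y
  simp only [Submodule.mem_bot]
  constructor
  · intro h
    have := h 1 Submodule.mem_top
    rwa [one_mul] at this
  · rintro rfl a _
    exact mul_zero a

lemma lAnn_bot : lAnn R (⊥ : Submodule Rᵐᵒᵖ R) = ⊤ := by
  ext x
  simp only [Submodule.mem_top, iff_true]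
  intro y hy
  rw [Submodule.mem_bot] at hy
  rw [hy, mul_zero]

lemma lAnn_top : lAnn R (⊤ : Submodule Rᵐᵒᵖ R) = ⊥ := by
  ext x
  simp only [Submodule.mem_bot]
  constructor
  · intro h
    have := h 1 Submodule.mem_top
    rwa [mul_one] at this
  · rintro rfl y _
    exact zero_mul y

lemma rAnn_bot : rAnn R (⊥ : Submodule R R) = ⊤ := by
  ext y
  simp only [Submodule.mem_top, iff_true]
  intro a ha
  rw [Submodule.mem_bot] at ha
  rw [ha, zero_mul]

section Card

variable [Fintype R]

lemma card_lt_card {A : Type*} [Semiring A] [Module A R] {S T : Submodule A R} (h : S < T) :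
    Nat.card S < Nat.card T := by
  have h1 : (S : Set R) ⊂ (T : Set R) := SetLike.coe_ssubset_coe.mpr h
  have e1 : Nat.card S = (S : Set R).ncard := Nat.card_coe_set_eq _
  have e2 : Nat.card T = (T : Set R).ncard := Nat.card_coe_set_eq _
  rw [e1, e2]
  exact Set.ncard_lt_ncard h1 (Set.toFinite _)

lemma card_le_card_ring {A : Type*} [Semiring A] [Module A R] (S : Submodule A R) :
    Nat.card S ≤ Fintype.card R := by
  rw [← Nat.card_eq_fintype_card]
  exact Nat.card_le_card_of_injective _ Subtype.val_injective

lemma eq_top_of_card {A : Type*} [Semiring A] [Module A R] {S : Submodule A R}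
    (h : Fintype.card R ≤ Nat.card S) : S = ⊤ := by
  apply SetLike.coe_injective
  have : (S : Set R) = Set.univ := by
    apply Set.eq_of_subset_of_ncard_le (Set.subset_univ _)
    rw [Set.ncard_univ, Nat.card_eq_fintype_card, ← Nat.card_coe_set_eq]
    exact h
  rw [this]
  rfl

lemma card_span_left_eq {c c' : R} (h : ∀ v, v * c = 0 ↔ v * c' = 0) :
    Nat.card (Submodule.span R ({c} : Set R)) = Nat.card (Submodule.span R ({c'} : Set R)) := by
  have k1 : LinearMap.ker (LinearMap.toSpanSingleton R R c)
      = LinearMap.ker (LinearMap.toSpanSingleton R R c') := by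
    ext v
    simp only [LinearMap.mem_ker, LinearMap.toSpanSingleton_apply, smul_eq_mul]
    exact h v
  have e1 : Submodule.span R ({c} : Set R) = LinearMap.range (LinearMap.toSpanSingleton R R c) :=
    LinearMap.span_singleton_eq_range R R c
  have e2 : Submodule.span R ({c'} : Set R) = LinearMap.range (LinearMap.toSpanSingleton R R c') :=
    LinearMap.span_singleton_eq_range R R c'
  rw [e1, e2]
  rw [← Nat.card_congr (LinearMap.quotKerEquivRange (LinearMap.toSpanSingleton R R c)).toEquiv,
    ← Nat.card_congr (LinearMap.quotKerEquivRange (LinearMap.toSpanSingleton R R c')).toEquiv, k1]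

lemma card_span_right_eq {c c' : R} (h : ∀ v, c * v = 0 ↔ c' * v = 0) :
    Nat.card (Submodule.span Rᵐᵒᵖ ({c} : Set R))
      = Nat.card (Submodule.span Rᵐᵒᵖ ({c'} : Set R)) := by
  have k1 : LinearMap.ker (LinearMap.toSpanSingleton Rᵐᵒᵖ R c)
      = LinearMap.ker (LinearMap.toSpanSingleton Rᵐᵒᵖ R c') := by
    ext v
    simp only [LinearMap.mem_ker, LinearMap.toSpanSingleton_apply,
      MulOpposite.smul_eq_mul_unop]
    exact h v.unop
  have e1 : Submodule.span Rᵐᵒᵖ ({c} : Set R)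
      = LinearMap.range (LinearMap.toSpanSingleton Rᵐᵒᵖ R c) :=
    LinearMap.span_singleton_eq_range Rᵐᵒᵖ R c
  have e2 : Submodule.span Rᵐᵒᵖ ({c'} : Set R)
      = LinearMap.range (LinearMap.toSpanSingleton Rᵐᵒᵖ R c') :=
    LinearMap.span_singleton_eq_range Rᵐᵒᵖ R c'
  rw [e1, e2]
  rw [← Nat.card_congr (LinearMap.quotKerEquivRange (LinearMap.toSpanSingleton Rᵐᵒᵖ R c)).toEquiv,
    ← Nat.card_congr
      (LinearMap.quotKerEquivRange (LinearMap.toSpanSingleton Rᵐᵒᵖ R c')).toEquiv, k1]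

/-- In a finite ring, if `wR ≠ R` then `w` has a nonzero left annihilator. -/
lemma exists_lkill {w : R} (hw : Submodule.span Rᵐᵒᵖ ({w} : Set R) ≠ ⊤) :
    ∃ v : R, v ≠ 0 ∧ v * w = 0 := by
  by_contra hcon
  push_neg at hcon
  have hker : ∀ v : R, v * w = 0 → v = 0 := by
    intro v hv
    by_contra h0
    exact hcon v h0 hv
  have hinj : Function.Injective (fun x : R => x * w) := by
    intro x y hxy
    have hxy' : x * w = y * w := hxy
    have hsub : (x - y) * w = 0 := by
      rw [sub_mul, hxy', sub_self]
    exact sub_eq_zero.mp (hker _ hsub)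
  obtain ⟨u, hu⟩ := Finite.injective_iff_surjective.mp hinj 1
  simp only at hu
  have hwu : w * u = 1 := by
    have hsub : (w * u - 1) * w = 0 := by
      rw [sub_mul, one_mul, mul_assoc, hu, mul_one, sub_self]
    exact sub_eq_zero.mp (hker _ hsub)
  apply hw
  rw [Submodule.eq_top_iff']
  intro x
  have h1 : (1 : R) ∈ Submodule.span Rᵐᵒᵖ ({w} : Set R) := by
    have := Submodule.smul_mem (Submodule.span Rᵐᵒᵖ ({w} : Set R)) (MulOpposite.op u)
      (Submodule.mem_span_singleton_self w)
    rwa [MulOpposite.smul_eq_mul_unop, MulOpposite.unop_op, hwu] at this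
  have := Submodule.smul_mem (Submodule.span Rᵐᵒᵖ ({w} : Set R)) (MulOpposite.op x) h1
  rwa [MulOpposite.smul_eq_mul_unop, MulOpposite.unop_op, one_mul] at this

/-- In a finite ring, if `Rw ≠ R` then `w` has a nonzero right annihilator. -/
lemma exists_rkill {w : R} (hw : Submodule.span R ({w} : Set R) ≠ ⊤) :
    ∃ v : R, v ≠ 0 ∧ w * v = 0 := by
  by_contra hcon
  push_neg at hcon
  have hker : ∀ v : R, w * v = 0 → v = 0 := by
    intro v hv
    by_contra h0
    exact hcon v h0 hv
  have hinj : Function.Injective (fun x : R => w * x) := by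
    intro x y hxy
    have hxy' : w * x = w * y := hxy
    have hsub : w * (x - y) = 0 := by
      rw [mul_sub, hxy', sub_self]
    exact sub_eq_zero.mp (hker _ hsub)
  obtain ⟨u, hu⟩ := Finite.injective_iff_surjective.mp hinj 1
  simp only at hu
  have huw : u * w = 1 := by
    have hsub : w * (u * w - 1) = 0 := by
      rw [mul_sub, mul_one, ← mul_assoc, hu, one_mul, sub_self]
    exact sub_eq_zero.mp (hker _ hsub)
  apply hw
  rw [Submodule.eq_top_iff']
  intro x
  have h1 : (1 : R) ∈ Submodule.span R ({w} : Set R) := by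
    have := Submodule.smul_mem (Submodule.span R ({w} : Set R)) u
      (Submodule.mem_span_singleton_self w)
    rwa [smul_eq_mul, huw] at this
  have := Submodule.smul_mem (Submodule.span R ({w} : Set R)) x h1
  rwa [smul_eq_mul, mul_one] at this

/-- Key lemma, left version: if `L ≤ M`, `rAnn L = rAnn M`, `M = Rc` and `cR` is
closed (`r(ℓ(cR)) = cR`), then `L = M`. -/
lemma lemA (hlp : ∀ L : Submodule R R, ∃ a : R, L = Submodule.span R {a})
    {L M : Submodule R R} (hLM : L ≤ M) (hr : rAnn R L = rAnn R M)
    {c : R} (hM : M = Submodule.span R ({c} : Set R))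
    (hcl : rAnn R (lAnn R (Submodule.span Rᵐᵒᵖ ({c} : Set R)))
      = Submodule.span Rᵐᵒᵖ ({c} : Set R)) :
    L = M := by
  obtain ⟨a, hL⟩ := hlp L
  have haL : a ∈ L := hL ▸ Submodule.mem_span_singleton_self a
  have haM : a ∈ Submodule.span R ({c} : Set R) := hM ▸ hLM haL
  obtain ⟨t, hta⟩ := Submodule.mem_span_singleton.mp haM
  rw [smul_eq_mul] at hta
  set W := lAnn R (Submodule.span Rᵐᵒᵖ ({c} : Set R)) ⊔ Submodule.span R ({t} : Set R) with hWdef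
  have hWtop : W = ⊤ := by
    by_contra hW
    obtain ⟨w, hw⟩ := hlp W
    have hwne : Submodule.span R ({w} : Set R) ≠ ⊤ := hw ▸ hW
    obtain ⟨v, hv0, hwv⟩ := exists_rkill hwne
    have hWv : ∀ x ∈ W, x * v = 0 := by
      intro x hx
      rw [hw] at hx
      obtain ⟨u, rfl⟩ := Submodule.mem_span_singleton.mp hx
      rw [smul_eq_mul, mul_assoc, hwv, mul_zero]
    have hvr : v ∈ rAnn R (lAnn R (Submodule.span Rᵐᵒᵖ ({c} : Set R))) := by
      intro x hx
      exact hWv x (le_sup_left (α := Submodule R R) hx)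
    rw [hcl] at hvr
    obtain ⟨s, hs⟩ := Submodule.mem_span_singleton.mp hvr
    rw [MulOpposite.smul_eq_mul_unop] at hs
    have htW : t ∈ W := le_sup_right (α := Submodule R R) (Submodule.mem_span_singleton_self t)
    have htv : t * v = 0 := hWv t htW
    have has : a * s.unop = 0 := by
      rw [← hta, mul_assoc, hs]
      exact htv
    have hsr : s.unop ∈ rAnn R L := by
      rw [hL]
      exact mem_rAnn_span.mpr has
    rw [hr, hM] at hsr
    have hcs : c * s.unop = 0 := mem_rAnn_span.mp hsr
    apply hv0
    rw [← hs, hcs]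
  have h1W : (1 : R) ∈ W := hWtop ▸ Submodule.mem_top
  obtain ⟨p, hp, x, hx, hpx⟩ := Submodule.mem_sup.mp h1W
  obtain ⟨y, hy⟩ := Submodule.mem_span_singleton.mp hx
  rw [smul_eq_mul] at hy
  have hcL : c ∈ L := by
    have hpc : p * c = 0 := mem_lAnn_span.mp hp
    have hc : c = y * a := by
      calc c = (p + x) * c := by rw [hpx, one_mul]
        _ = p * c + x * c := by rw [add_mul]
        _ = x * c := by rw [hpc, zero_add]
        _ = y * (t * c) := by rw [← hy, mul_assoc]
        _ = y * a := by rw [hta]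
    rw [hc, hL]
    have := Submodule.smul_mem (Submodule.span R ({a} : Set R)) y
      (Submodule.mem_span_singleton_self a)
    rwa [smul_eq_mul] at this
  have hML : M ≤ L := by
    rw [hM]
    exact Submodule.span_le.mpr (Set.singleton_subset_iff.mpr hcL)
  exact le_antisymm hLM hML

/-- Key lemma, right version. -/
lemma lemA' (hrp : ∀ J : Submodule Rᵐᵒᵖ R, ∃ a : R, J = Submodule.span Rᵐᵒᵖ {a})
    {J K : Submodule Rᵐᵒᵖ R} (hJK : J ≤ K) (hl : lAnn R J = lAnn R K)
    {c : R} (hK : K = Submodule.span Rᵐᵒᵖ ({c} : Set R))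
    (hcl : lAnn R (rAnn R (Submodule.span R ({c} : Set R)))
      = Submodule.span R ({c} : Set R)) :
    J = K := by
  obtain ⟨a, hJ⟩ := hrp J
  have haJ : a ∈ J := hJ ▸ Submodule.mem_span_singleton_self a
  have haK : a ∈ Submodule.span Rᵐᵒᵖ ({c} : Set R) := hK ▸ hJK haJ
  obtain ⟨t0, hta⟩ := Submodule.mem_span_singleton.mp haK
  rw [MulOpposite.smul_eq_mul_unop] at hta
  set t := t0.unop with ht_def
  set W := rAnn R (Submodule.span R ({c} : Set R)) ⊔ Submodule.span Rᵐᵒᵖ ({t} : Set R) with hWdef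
  have hWtop : W = ⊤ := by
    by_contra hW
    obtain ⟨w, hw⟩ := hrp W
    have hwne : Submodule.span Rᵐᵒᵖ ({w} : Set R) ≠ ⊤ := hw ▸ hW
    obtain ⟨v, hv0, hwv⟩ := exists_lkill hwne
    have hWv : ∀ x ∈ W, v * x = 0 := by
      intro x hx
      rw [hw] at hx
      obtain ⟨u, rfl⟩ := Submodule.mem_span_singleton.mp hx
      rw [MulOpposite.smul_eq_mul_unop, ← mul_assoc, hwv, zero_mul]
    have hvl : v ∈ lAnn R (rAnn R (Submodule.span R ({c} : Set R))) := by
      intro x hx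
      exact hWv x (le_sup_left (α := Submodule Rᵐᵒᵖ R) hx)
    rw [hcl] at hvl
    obtain ⟨s, hs⟩ := Submodule.mem_span_singleton.mp hvl
    rw [smul_eq_mul] at hs
    have htW : t ∈ W := le_sup_right (α := Submodule Rᵐᵒᵖ R) (Submodule.mem_span_singleton_self t)
    have htv : v * t = 0 := hWv t htW
    have hsa : s * a = 0 := by
      rw [← hta, ← mul_assoc, hs]
      exact htv
    have hsl : s ∈ lAnn R J := by
      rw [hJ]
      exact mem_lAnn_span.mpr hsa
    rw [hl, hK] at hsl
    have hsc : s * c = 0 := mem_lAnn_span.mp hsl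
    apply hv0
    rw [← hs, hsc]
  have h1W : (1 : R) ∈ W := hWtop ▸ Submodule.mem_top
  obtain ⟨q, hq, x, hx, hqx⟩ := Submodule.mem_sup.mp h1W
  obtain ⟨y, hy⟩ := Submodule.mem_span_singleton.mp hx
  rw [MulOpposite.smul_eq_mul_unop] at hy
  have hcJ : c ∈ J := by
    have hcq : c * q = 0 := mem_rAnn_span.mp hq
    have hc : c = a * y.unop := by
      calc c = c * (q + x) := by rw [hqx, mul_one]
        _ = c * q + c * x := by rw [mul_add]
        _ = c * x := by rw [hcq, zero_add]
        _ = (c * t) * y.unop := by rw [← hy, mul_assoc]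
        _ = a * y.unop := by rw [hta]
    rw [hc, hJ]
    have := Submodule.smul_mem (Submodule.span Rᵐᵒᵖ ({a} : Set R)) (MulOpposite.op y.unop)
      (Submodule.mem_span_singleton_self a)
    rwa [MulOpposite.smul_eq_mul_unop, MulOpposite.unop_op] at this
  have hKJ : K ≤ J := by
    rw [hK]
    exact Submodule.span_le.mpr (Set.singleton_subset_iff.mpr hcJ)
  exact le_antisymm hJK hKJ

/-- Main duality: every principal one-sided ideal is closed under double annihilators.
Proven by induction on a cardinality deficiency measure. -/
lemma main (hlp : ∀ L : Submodule R R, ∃ a : R, L = Submodule.span R {a})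
    (hrp : ∀ J : Submodule Rᵐᵒᵖ R, ∃ a : R, J = Submodule.span Rᵐᵒᵖ {a}) :
    ∀ (k : ℕ) (c : R),
    2 * Fintype.card R ≤
      (Nat.card (Submodule.span R ({c} : Set R))
        + Nat.card (Submodule.span Rᵐᵒᵖ ({c} : Set R))) + k →
    (lAnn R (rAnn R (Submodule.span R ({c} : Set R))) = Submodule.span R ({c} : Set R)) ∧
    (rAnn R (lAnn R (Submodule.span Rᵐᵒᵖ ({c} : Set R))) = Submodule.span Rᵐᵒᵖ ({c} : Set R)) := by
  intro k
  induction k with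
  | zero =>
    intro c hc
    have h1 : Nat.card (Submodule.span R ({c} : Set R)) ≤ Fintype.card R :=
      card_le_card_ring _
    have h2 : Nat.card (Submodule.span Rᵐᵒᵖ ({c} : Set R)) ≤ Fintype.card R :=
      card_le_card_ring _
    have e1 : Submodule.span R ({c} : Set R) = ⊤ := eq_top_of_card (by omega)
    have e2 : Submodule.span Rᵐᵒᵖ ({c} : Set R) = ⊤ := eq_top_of_card (by omega)
    rw [e1, e2, rAnn_top, lAnn_bot, lAnn_top, rAnn_bot]
    exact ⟨rfl, rfl⟩
  | succ k ih =>
    intro c hc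
    constructor
    · -- left closedness of `Rc`
      set K := lAnn R (rAnn R (Submodule.span R ({c} : Set R))) with hKdef
      have hle : Submodule.span R ({c} : Set R) ≤ K := le_lAnn_rAnn
      by_cases heq : Submodule.span R ({c} : Set R) = K
      · exact heq.symm
      · obtain ⟨c', hK⟩ := hlp K
        have hlt : Submodule.span R ({c} : Set R) < K := lt_of_le_of_ne hle heq
        have hre : rAnn R (Submodule.span R ({c'} : Set R))
            = rAnn R (Submodule.span R ({c} : Set R)) := by
          rw [← hK]
          exact rAnn_lAnn_rAnn
        have hmemiff : ∀ v, c' * v = 0 ↔ c * v = 0 := by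
          intro v
          rw [← mem_rAnn_span (c := c'), ← mem_rAnn_span (c := c), hre]
        have hcardop : Nat.card (Submodule.span Rᵐᵒᵖ ({c'} : Set R))
            = Nat.card (Submodule.span Rᵐᵒᵖ ({c} : Set R)) :=
          card_span_right_eq hmemiff
        have hcardlt : Nat.card (Submodule.span R ({c} : Set R))
            < Nat.card (Submodule.span R ({c'} : Set R)) := by
          have := card_lt_card hlt
          rwa [hK] at this
        have hIH := ih c' (by omega)
        have hr2 : rAnn R (Submodule.span R ({c} : Set R)) = rAnn R K := by
          rw [hKdef]
          exact rAnn_lAnn_rAnn.symm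
        have := lemA hlp hle hr2 hK hIH.2
        exact this.symm
    · -- right closedness of `cR`
      set K := rAnn R (lAnn R (Submodule.span Rᵐᵒᵖ ({c} : Set R))) with hKdef
      have hle : Submodule.span Rᵐᵒᵖ ({c} : Set R) ≤ K := le_rAnn_lAnn
      by_cases heq : Submodule.span Rᵐᵒᵖ ({c} : Set R) = K
      · exact heq.symm
      · obtain ⟨c', hK⟩ := hrp K
        have hlt : Submodule.span Rᵐᵒᵖ ({c} : Set R) < K := lt_of_le_of_ne hle heq
        have hre : lAnn R (Submodule.span Rᵐᵒᵖ ({c'} : Set R))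
            = lAnn R (Submodule.span Rᵐᵒᵖ ({c} : Set R)) := by
          rw [← hK]
          exact lAnn_rAnn_lAnn
        have hmemiff : ∀ v, v * c' = 0 ↔ v * c = 0 := by
          intro v
          rw [← mem_lAnn_span (c := c'), ← mem_lAnn_span (c := c), hre]
        have hcardl : Nat.card (Submodule.span R ({c'} : Set R))
            = Nat.card (Submodule.span R ({c} : Set R)) :=
          card_span_left_eq hmemiff
        have hcardlt : Nat.card (Submodule.span Rᵐᵒᵖ ({c} : Set R))
            < Nat.card (Submodule.span Rᵐᵒᵖ ({c'} : Set R)) := by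
          have := card_lt_card hlt
          rwa [hK] at this
        have hIH := ih c' (by omega)
        have hl2 : lAnn R (Submodule.span Rᵐᵒᵖ ({c} : Set R)) = lAnn R K := by
          rw [hKdef]
          exact lAnn_rAnn_lAnn.symm
        have := lemA' hrp hle hl2 hK hIH.1
        exact this.symm

/-- Every left ideal is closed: `ℓ(r(L)) = L`. -/
lemma closed_left (hlp : ∀ L : Submodule R R, ∃ a : R, L = Submodule.span R {a})
    (hrp : ∀ J : Submodule Rᵐᵒᵖ R, ∃ a : R, J = Submodule.span Rᵐᵒᵖ {a})
    (L : Submodule R R) : lAnn R (rAnn R L) = L := by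
  obtain ⟨a, rfl⟩ := hlp L
  exact (main hlp hrp (2 * Fintype.card R) a (by omega)).1

/-- The right-annihilator map is injective on left ideals. -/
lemma rAnn_injective (hlp : ∀ L : Submodule R R, ∃ a : R, L = Submodule.span R {a})
    (hrp : ∀ J : Submodule Rᵐᵒᵖ R, ∃ a : R, J = Submodule.span Rᵐᵒᵖ {a})
    {L M : Submodule R R} (h : rAnn R L = rAnn R M) : L = M := by
  rw [← closed_left hlp hrp L, ← closed_left hlp hrp M, h]

end Card

end Stmt7Aux

/-- over a finite principal ideal ring, the matrix
`T(L,J) = [J ≤ L^⊥]` (rows: left ideals, columns: right ideals) and the matrix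
`Q(J,L) = μ(L^⊥, J)` (rows: right ideals, columns: left ideals), where `μ` is
the Möbius function of the lattice of right ideals, satisfy `T·Q = 1`. -/
theorem stmt7 (R : Type) [Ring R] [Fintype R]
    (hlp : ∀ L : Submodule R R, ∃ a : R, L = Submodule.span R {a})
    (hrp : ∀ J : Submodule Rᵐᵒᵖ R, ∃ a : R, J = Submodule.span Rᵐᵒᵖ {a})
    (μ : Submodule Rᵐᵒᵖ R → Submodule Rᵐᵒᵖ R → ℚ)
    (hμ₁ : ∀ I, μ I I = 1)
    (hμ₂ : ∀ I J, I < J →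
      ∑ K ∈ Finset.univ.filter (fun K => I ≤ K ∧ K ≤ J), μ I K = 0)
    (hμ₃ : ∀ I J, ¬ I ≤ J → μ I J = 0)
    (T : Matrix (Submodule R R) (Submodule Rᵐᵒᵖ R) ℚ)
    (hT : ∀ L J, T L J = if J ≤ rAnn R L then 1 else 0)
    (Q : Matrix (Submodule Rᵐᵒᵖ R) (Submodule R R) ℚ)
    (hQ : ∀ J L, Q J L = μ (rAnn R L) J) :
    T * Q = 1 := by
  ext L M
  rw [Matrix.mul_apply, Matrix.one_apply]
  by_cases hLM : L = M
  · subst hLM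
    rw [if_pos rfl]
    have hterm : ∀ J : Submodule Rᵐᵒᵖ R,
        T L J * Q J L = if J = rAnn R L then 1 else 0 := by
      intro J
      rw [hT, hQ]
      by_cases hJ : J = rAnn R L
      · subst hJ
        rw [if_pos le_rfl, if_pos rfl, hμ₁, one_mul]
      · rw [if_neg hJ]
        by_cases hle : J ≤ rAnn R L
        · have : ¬ rAnn R L ≤ J := fun h => hJ (le_antisymm hle h)
          rw [if_pos hle, hμ₃ _ _ this, one_mul]
        · rw [if_neg hle, zero_mul]
    rw [Finset.sum_congr rfl fun J _ => hterm J]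
    rw [Finset.sum_ite_eq' Finset.univ (rAnn R L) (fun _ => (1 : ℚ))]
    rw [if_pos (Finset.mem_univ _)]
  · rw [if_neg hLM]
    by_cases hle : rAnn R M ≤ rAnn R L
    · have hne : rAnn R M ≠ rAnn R L := by
        intro h
        exact hLM (Stmt7Aux.rAnn_injective hlp hrp h).symm
      have hlt : rAnn R M < rAnn R L := lt_of_le_of_ne hle hne
      have hsum := hμ₂ (rAnn R M) (rAnn R L) hlt
      rw [Finset.sum_filter] at hsum
      rw [← hsum]
      apply Finset.sum_congr rfl
      intro J _
      rw [hT, hQ]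
      by_cases h1 : J ≤ rAnn R L
      · by_cases h2 : rAnn R M ≤ J
        · rw [if_pos h1, if_pos ⟨h2, h1⟩, one_mul]
        · rw [if_pos h1, if_neg (by tauto), hμ₃ _ _ h2, one_mul]
      · rw [if_neg h1, if_neg (by tauto), zero_mul]
    · apply Finset.sum_eq_zero
      intro J _
      rw [hT, hQ]
      by_cases h1 : J ≤ rAnn R L
      · have : ¬ rAnn R M ≤ J := fun h => hle (le_trans h h1)
        rw [if_pos h1, hμ₃ _ _ this, one_mul]
      · rw [if_neg h1, zero_mul]
end

section
/- Let R be a finite Frobenius ring (a finite ring admitting a generating character: an additive character χ : (R,+) → ℂ^× such that r ↦ (x ↦ χ(rx)) is a bijection from R onto the group of additive characters of R), and let w_H be the Hamming weight on R. Then every right-invariant function g : R → ℚ with g(0) = 0 is a right correlation of w_H: there exists f : R → ℚ such that ∑_{r ∈ R} w_H(rx)·f(r) = g(x) for all x ∈ R. -/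
set_option linter.unusedSectionVars false

/-- A finite ring is Frobenius if it admits a generating character: an additive
character `χ : (R,+) → ℂ^×` such that `r ↦ (x ↦ χ(rx))` is a bijection from `R`
onto the group of additive characters of `R`. -/
def IsFrobenius (R : Type) [Ring R] : Prop :=
  ∃ χ : AddChar R ℂ, ∀ ψ : AddChar R ℂ, ∃! r : R, ∀ x : R, ψ x = χ (r * x)

namespace Stmt19
open Finset

variable {R : Type} [Ring R] [Fintype R] [DecidableEq R]

def rid (z : R) : Finset R := Finset.image (fun t => z * t) Finset.univ

lemma mem_rid {z y : R} : y ∈ rid z ↔ ∃ t, z * t = y := by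
  simp [rid, eq_comm]

lemma self_mem_rid (z : R) : z ∈ rid z := mem_rid.2 ⟨1, mul_one z⟩

lemma zero_mem_rid (z : R) : (0 : R) ∈ rid z := mem_rid.2 ⟨0, mul_zero z⟩

lemma rid_subset_of_mem {z w : R} (h : z ∈ rid w) : rid z ⊆ rid w := by
  obtain ⟨t, ht⟩ := mem_rid.1 h
  intro y hy
  obtain ⟨t', ht'⟩ := mem_rid.1 hy
  exact mem_rid.2 ⟨t * t', by rw [← mul_assoc, ht, ht']⟩

lemma mul_mem_rid {N : Finset R} {m : R} (hN : N = rid m) {z : R} (hz : z ∈ N) (t : R) :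
    z * t ∈ N := by
  subst hN
  obtain ⟨t', ht'⟩ := mem_rid.1 hz
  exact mem_rid.2 ⟨t' * t, by rw [← mul_assoc, ht']⟩

lemma sub_mem_rid {N : Finset R} {m : R} (hN : N = rid m) {z w : R}
    (hz : z ∈ N) (hw : w ∈ N) : z - w ∈ N := by
  subst hN
  obtain ⟨t, ht⟩ := mem_rid.1 hz
  obtain ⟨t', ht'⟩ := mem_rid.1 hw
  exact mem_rid.2 ⟨t - t', by rw [mul_sub, ht, ht']⟩

/-- in a finite monoid, some positive power of every element is idempotent. -/
lemma exists_idem_pow (a : R) : ∃ n : ℕ, 0 < n ∧ a ^ n * a ^ n = a ^ n := by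
  obtain ⟨i, j, hij, hpow⟩ := Finite.exists_ne_map_eq_of_infinite (fun n : ℕ => a ^ (n + 1))
  wlog hlt : i < j generalizing i j
  · exact this j i hij.symm hpow.symm (by omega)
  set p := j - i with hp
  have hp1 : 1 ≤ p := by omega
  have hstep : ∀ m, i + 1 ≤ m → a ^ m = a ^ (m + p) := by
    intro m hm
    have : a ^ m = a ^ (i + 1) * a ^ (m - (i + 1)) := by
      rw [← pow_add]; congr 1; omega
    rw [this, hpow]
    rw [← pow_add]; congr 1; omega
  have habs : ∀ t m, i + 1 ≤ m → a ^ m = a ^ (m + p * t) := by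
    intro t
    induction t with
    | zero => intro m _; simp
    | succ t ih =>
      intro m hm
      rw [hstep m hm, ih (m + p) (by omega)]
      congr 1; ring
  refine ⟨p * (i + 1), by positivity, ?_⟩
  rw [← pow_add]
  exact (habs (i + 1) (p * (i + 1)) (by nlinarith)).symm

lemma idem_pow_absorb {c : R} {N : ℕ} (h : c ^ N * c ^ N = c ^ N) :
    ∀ k, 1 ≤ k → c ^ (k * N) = c ^ N := by
  intro k hk
  induction k with
  | zero => omega
  | succ k ih =>
    rcases Nat.eq_or_lt_of_le hk with h1 | h1
    · simp [← h1]
    · have hk' : 1 ≤ k := by omega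
      rw [add_mul, one_mul, pow_add, ih hk', h]


/-- right Peirce decomposition counting, for a principal right ideal finset. -/
lemma peirce_card {N : Finset R} {m : R} (hN : N = rid m) (e : R) (he : e * e = e) :
    N.card = (N.filter (fun z => z * e = z)).card * (N.filter (fun z => z * e = 0)).card := by
  rw [← Finset.card_product]
  apply Finset.card_bij' (fun z _ => (z * e, z - z * e))
    (fun p _ => p.1 + p.2)
  · intro z hz
    simp only [Finset.mem_product, Finset.mem_filter]
    refine ⟨⟨mul_mem_rid hN hz e, by rw [mul_assoc, he]⟩,
      ⟨sub_mem_rid hN hz (mul_mem_rid hN hz e), ?_⟩⟩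
    rw [sub_mul, mul_assoc, he, sub_self]
  · intro p hp
    simp only [Finset.mem_product, Finset.mem_filter] at hp
    have h0 : (0 : R) ∈ N := hN ▸ zero_mem_rid m
    have := sub_mem_rid hN h0 hp.2.1
    have := sub_mem_rid hN hp.1.1 this
    simpa [sub_sub_cancel, sub_neg_eq_add, zero_sub] using this
  · intro z hz; rw [add_comm, sub_add_cancel]
  · intro p hp
    simp only [Finset.mem_product, Finset.mem_filter] at hp
    have h1 := hp.1.2
    have h2 := hp.2.2
    ext <;> simp [add_mul, h1, h2]
  
/-- left Peirce decomposition counting on the whole ring. -/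
lemma peirce_card_left (e : R) (he : e * e = e) :
    (univ : Finset R).card =
      (univ.filter (fun z : R => e * z = z)).card * (univ.filter (fun z : R => e * z = 0)).card := by
  rw [← Finset.card_product]
  apply Finset.card_bij' (fun z _ => (e * z, z - e * z)) (fun p _ => p.1 + p.2)
  · intro z _
    simp only [Finset.mem_product, Finset.mem_filter]
    refine ⟨⟨mem_univ _, by rw [← mul_assoc, he]⟩, ⟨mem_univ _, ?_⟩⟩
    rw [mul_sub, ← mul_assoc, he, sub_self]
  · intro p _; exact mem_univ _
  · intro z _; rw [add_comm, sub_add_cancel]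
  · intro p hp
    simp only [Finset.mem_product, Finset.mem_filter] at hp
    have h1 := hp.1.2
    have h2 := hp.2.2
    ext <;> simp [mul_add, h1, h2]

lemma fix_card_eq {N : Finset R} {m : R} (hN : N = rid m) {e f a b : R}
    (hab : a * b = e) (hba : b * a = f) (haf : a * f = a) (hbe : b * e = b) :
    (N.filter (fun z => z * e = z)).card = (N.filter (fun z => z * f = z)).card := by
  apply Finset.card_bij' (fun z _ => z * a) (fun z _ => z * b)
  · intro z hz
    simp only [Finset.mem_filter] at hz ⊢
    exact ⟨mul_mem_rid hN hz.1 a, by rw [mul_assoc, haf]⟩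
  · intro z hz
    simp only [Finset.mem_filter] at hz ⊢
    exact ⟨mul_mem_rid hN hz.1 b, by rw [mul_assoc, hbe]⟩
  · intro z hz
    simp only [Finset.mem_filter] at hz
    rw [mul_assoc, hab, hz.2]
  · intro z hz
    simp only [Finset.mem_filter] at hz
    rw [mul_assoc, hba, hz.2]

lemma fix_card_eq_left {e f a b : R}
    (hab : a * b = e) (hba : b * a = f) (hfb : f * b = b) (hae : e * a = a) :
    (univ.filter (fun z : R => e * z = z)).card = (univ.filter (fun z : R => f * z = z)).card := by
  apply Finset.card_bij' (fun z _ => b * z) (fun z _ => a * z)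
  · intro z hz
    simp only [Finset.mem_filter] at hz ⊢
    exact ⟨mem_univ _, by rw [← mul_assoc, hfb]⟩
  · intro z hz
    simp only [Finset.mem_filter] at hz ⊢
    exact ⟨mem_univ _, by rw [← mul_assoc, hae]⟩
  · intro z hz
    simp only [Finset.mem_filter] at hz
    rw [← mul_assoc, hab, hz.2]
  · intro z hz
    simp only [Finset.mem_filter] at hz
    rw [← mul_assoc, hba, hz.2]

lemma count0_eq {N : Finset R} {m : R} (hN : N = rid m) {e f a b : R}
    (he : e * e = e) (hf : f * f = f)
    (hab : a * b = e) (hba : b * a = f) (haf : a * f = a) (hbe : b * e = b) :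
    (N.filter (fun z => z * e = 0)).card = (N.filter (fun z => z * f = 0)).card := by
  have h1 := peirce_card hN e he
  have h2 := peirce_card hN f hf
  have h3 := fix_card_eq hN hab hba haf hbe
  have hpos : 0 < (N.filter (fun z => z * e = z)).card := by
    apply Finset.card_pos.2
    exact ⟨0, Finset.mem_filter.2 ⟨hN ▸ zero_mem_rid m, by simp⟩⟩
  apply Nat.eq_of_mul_eq_mul_left hpos
  rw [← h1, h2, h3]


lemma count0_sum (N : Finset R) {m : R} (hN : N = rid m) (e : R) :
    (N.filter (fun z => z * e = 0)).card
      = ∑ M ∈ ((univ.image (rid : R → Finset R)).filter (· ⊆ N)),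
          (univ.filter (fun z => z * e = 0 ∧ rid z = M)).card := by
  rw [Finset.card_eq_sum_card_fiberwise
    (f := fun z => rid z)
    (t := (univ.image (rid : R → Finset R)).filter (· ⊆ N)) ?_]
  · apply Finset.sum_congr rfl
    intro M hM
    congr 1
    ext z
    simp only [Finset.mem_filter, Finset.mem_univ, true_and] at hM ⊢
    constructor
    · rintro ⟨⟨_, h0⟩, hr⟩; exact ⟨h0, hr⟩
    · rintro ⟨h0, hr⟩
      exact ⟨⟨hM.2 (hr ▸ self_mem_rid z), h0⟩, hr⟩
  · intro z hz
    simp only [Finset.mem_coe, Finset.mem_filter] at hz ⊢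
    refine ⟨Finset.mem_image.2 ⟨z, mem_univ z, rfl⟩, ?_⟩
    intro y hy
    obtain ⟨t, ht⟩ := mem_rid.1 hy
    exact ht ▸ mul_mem_rid hN hz.1 t

lemma gens_card_eq {e f a b : R}
    (he : e * e = e) (hf : f * f = f)
    (hab : a * b = e) (hba : b * a = f) (haf : a * f = a) (hbe : b * e = b) :
    ∀ (k : ℕ) (M : Finset R) (m : R), M = rid m → M.card ≤ k →
      (univ.filter (fun z : R => z * e = 0 ∧ rid z = M)).card
        = (univ.filter (fun z : R => z * f = 0 ∧ rid z = M)).card := by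
  intro k
  induction k with
  | zero =>
    intro M m hM hcard
    have : (0 : R) ∈ M := hM ▸ zero_mem_rid m
    have := Finset.card_pos.2 ⟨0, this⟩
    omega
  | succ k ih =>
    intro M m hM hcard
    have hMmem : M ∈ ((univ.image (rid : R → Finset R)).filter (· ⊆ M)) := by
      simp only [Finset.mem_filter]
      exact ⟨Finset.mem_image.2 ⟨m, mem_univ m, hM.symm⟩, Finset.Subset.refl M⟩
    have hsum_e := count0_sum M hM e
    have hsum_f := count0_sum M hM f
    rw [← Finset.add_sum_erase _ _ hMmem] at hsum_e hsum_f
    have herase : ∀ M' ∈ ((univ.image (rid : R → Finset R)).filter (· ⊆ M)).erase M,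
        (univ.filter (fun z : R => z * e = 0 ∧ rid z = M')).card
          = (univ.filter (fun z : R => z * f = 0 ∧ rid z = M')).card := by
      intro M' hM'
      have hne := Finset.ne_of_mem_erase hM'
      have hM'' := Finset.mem_of_mem_erase hM'
      simp only [Finset.mem_filter, Finset.mem_image] at hM''
      obtain ⟨⟨m', _, hm'⟩, hsub⟩ := hM''
      have : M'.card < M.card := Finset.card_lt_card (lt_of_le_of_ne hsub hne)
      exact ih M' m' hm'.symm (by omega)
    have hsums : ∑ M' ∈ ((univ.image (rid : R → Finset R)).filter (· ⊆ M)).erase M,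
        (univ.filter (fun z : R => z * e = 0 ∧ rid z = M')).card
          = ∑ M' ∈ ((univ.image (rid : R → Finset R)).filter (· ⊆ M)).erase M,
            (univ.filter (fun z : R => z * f = 0 ∧ rid z = M')).card :=
      Finset.sum_congr rfl herase
    have hcount := count0_eq hM he hf hab hba haf hbe
    omega



lemma unit_of_relations (x y : R) (e f a b : R)
    (he : e * e = e) (hf : f * f = f)
    (hab : a * b = e) (hba : b * a = f) (haf : a * f = a) (hbe : b * e = b)
    (hfb : f * b = b) (hae : e * a = a)
    (hxe : x * e = x) (hxa : x * a = y) :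
    ∃ u : Rˣ, y = x * u := by
  -- extract w with w * e = 0 and rid w = rid (1 - f)
  have hgens := gens_card_eq he hf hab hba haf hbe (rid ((1:R) - f)).card
      (rid ((1:R) - f)) (1 - f) rfl le_rfl
  have hfmem : (1 - f) ∈ univ.filter
      (fun z : R => z * f = 0 ∧ rid z = rid ((1:R) - f)) := by
    rw [Finset.mem_filter]
    exact ⟨mem_univ _, by rw [sub_mul, one_mul, hf, sub_self], rfl⟩
  have hpos : 0 < (univ.filter
      (fun z : R => z * e = 0 ∧ rid z = rid ((1:R) - f))).card := by
    rw [hgens]; exact Finset.card_pos.2 ⟨1 - f, hfmem⟩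
  obtain ⟨w, hw⟩ := Finset.card_pos.1 hpos
  rw [Finset.mem_filter] at hw
  obtain ⟨-, hwe, hwM⟩ := hw
  have hfw : f * w = 0 := by
    obtain ⟨t, ht⟩ := mem_rid.1 (hwM ▸ self_mem_rid w)
    rw [← ht, ← mul_assoc, mul_sub, mul_one, hf, sub_self, zero_mul]
  -- the sets A and B
  have hcardEF : (univ.filter (fun z : R => e * z = z)).card
      = (univ.filter (fun z : R => f * z = z)).card :=
    fix_card_eq_left hab hba hfb hae
  have hcardAB : (univ.filter (fun z : R => e * z = 0)).card
      = (univ.filter (fun z : R => f * z = 0)).card := by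
    have h1 := peirce_card_left e he
    have h2 := peirce_card_left f hf
    have hposE : 0 < (univ.filter (fun z : R => e * z = z)).card :=
      Finset.card_pos.2 ⟨e, Finset.mem_filter.2 ⟨mem_univ _, he⟩⟩
    apply Nat.eq_of_mul_eq_mul_left hposE
    rw [← h1, h2, hcardEF]
  -- surjectivity of z ↦ w * z from A to B
  have hsurj : ∀ q ∈ univ.filter (fun z : R => f * z = 0),
      ∃ z, ∃ _ : z ∈ univ.filter (fun z : R => e * z = 0), w * z = q := by
    intro q hq
    rw [Finset.mem_filter] at hq
    have hq1 : (1 - f) * q = q := by rw [sub_mul, one_mul, hq.2, sub_zero]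
    have : q ∈ rid w := by
      rw [hwM]; exact mem_rid.2 ⟨q, hq1⟩
    obtain ⟨t, ht⟩ := mem_rid.1 this
    refine ⟨t - e * t, ⟨?_, ?_⟩⟩
    · rw [Finset.mem_filter]
      exact ⟨mem_univ _, by rw [mul_sub, ← mul_assoc, he, sub_self]⟩
    · rw [mul_sub, ← mul_assoc, hwe, zero_mul, sub_zero, ht]
  have hinj : ∀ ⦃z₁⦄, z₁ ∈ univ.filter (fun z : R => e * z = 0) →
      ∀ ⦃z₂⦄, z₂ ∈ univ.filter (fun z : R => e * z = 0) → w * z₁ = w * z₂ → z₁ = z₂ := by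
    have hmaps : ∀ (z : R), z ∈ univ.filter (fun z : R => e * z = 0) →
        w * z ∈ univ.filter (fun z : R => f * z = 0) := by
      intro z _
      rw [Finset.mem_filter]
      exact ⟨mem_univ _, by rw [← mul_assoc, hfw, zero_mul]⟩
    exact fun z₁ h₁ z₂ h₂ hz =>
      Finset.inj_on_of_surj_on_of_card_le (fun z _ => w * z) hmaps
        (fun q hq => hsurj q hq) (le_of_eq hcardAB) h₁ h₂ hz
  -- get v
  have h1fB : (1 - f) ∈ univ.filter (fun z : R => f * z = 0) := by
    rw [Finset.mem_filter]
    exact ⟨mem_univ _, by rw [mul_sub, mul_one, hf, sub_self]⟩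
  obtain ⟨v, hvA, hwv⟩ := hsurj (1 - f) h1fB
  have hev : e * v = 0 := by
    rw [Finset.mem_filter] at hvA; exact hvA.2
  -- v * w = 1 - e
  have hvw : v * w = 1 - e := by
    have hm1 : v * w ∈ univ.filter (fun z : R => e * z = 0) := by
      rw [Finset.mem_filter]
      exact ⟨mem_univ _, by rw [← mul_assoc, hev, zero_mul]⟩
    have hm2 : (1 - e) ∈ univ.filter (fun z : R => e * z = 0) := by
      rw [Finset.mem_filter]
      exact ⟨mem_univ _, by rw [mul_sub, mul_one, he, sub_self]⟩
    apply hinj hm1 hm2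
    rw [← mul_assoc, hwv, sub_mul, one_mul, hfw, sub_zero, mul_sub, mul_one, hwe, sub_zero]
  -- assemble the unit
  have hu1 : (a + (v - v * f)) * (b + w) = 1 := by
    have haw : a * w = 0 := by rw [← haf, mul_assoc, hfw, mul_zero]
    have hvb : (v - v * f) * b = 0 := by rw [sub_mul, mul_assoc, hfb, sub_self]
    have hvw' : (v - v * f) * w = 1 - e := by
      rw [sub_mul, mul_assoc, hfw, mul_zero, sub_zero, hvw]
    rw [add_mul, mul_add, mul_add, hab, haw, hvb, hvw']
    abel
  have hu2 : (b + w) * (a + (v - v * f)) = 1 := by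
    have hbv : b * v = 0 := by rw [← hbe, mul_assoc, hev, mul_zero]
    have hbv' : b * (v - v * f) = 0 := by
      rw [mul_sub, hbv, ← mul_assoc, hbv, zero_mul, sub_self]
    have hwa : w * a = 0 := by rw [← hae, ← mul_assoc, hwe, zero_mul]
    have hwv' : w * (v - v * f) = 1 - f := by
      rw [mul_sub, hwv, ← mul_assoc, hwv, sub_mul, one_mul, hf, sub_self, sub_zero]
    rw [add_mul, mul_add, mul_add, hba, hbv', hwa, hwv']
    abel
  refine ⟨⟨a + (v - v * f), b + w, hu1, hu2⟩, ?_⟩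
  have hxv : x * v = 0 := by rw [← hxe, mul_assoc, hev, mul_zero]
  have hfin : x * (a + (v - v * f)) = y := by
    rw [mul_add, hxa, mul_sub, hxv, ← mul_assoc, hxv, zero_mul, sub_self, add_zero]
  rw [Units.val_mk, hfin]

/-- In a finite ring, generators of the same principal right ideal differ by a unit. -/
lemma unit_of_rid_eq (x y : R) (h : rid x = rid y) : ∃ u : Rˣ, y = x * u := by
  obtain ⟨r, hr⟩ := mem_rid.1 (h ▸ self_mem_rid y : y ∈ rid x)      -- x * r = y
  obtain ⟨s, hs⟩ := mem_rid.1 (h.symm ▸ self_mem_rid x : x ∈ rid y) -- y * s = x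
  have hxc : x * (r * s) = x := by rw [← mul_assoc, hr, hs]
  obtain ⟨n, hn, hcn⟩ := exists_idem_pow (r * s)
  obtain ⟨p, hp, hdp⟩ := exists_idem_pow (s * r)
  have hN : 1 ≤ n * p := Nat.one_le_iff_ne_zero.2 (by positivity)
  have hcN : (r * s) ^ (n * p) = (r * s) ^ n := by
    rw [mul_comm n p]; exact idem_pow_absorb hcn p hp
  have hdN : (s * r) ^ (n * p) = (s * r) ^ p := idem_pow_absorb hdp n hn
  have he : (r * s) ^ (n * p) * (r * s) ^ (n * p) = (r * s) ^ (n * p) := by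
    rw [hcN]; exact hcn
  have hf : (s * r) ^ (n * p) * (s * r) ^ (n * p) = (s * r) ^ (n * p) := by
    rw [hdN]; exact hdp
  set N := n * p
  have habs : ∀ k, 1 ≤ k → (r * s) ^ (k * N) = (r * s) ^ N := fun k hk =>
    idem_pow_absorb he k hk
  have habsd : ∀ k, 1 ≤ k → (s * r) ^ (k * N) = (s * r) ^ N := fun k hk =>
    idem_pow_absorb hf k hk
  have hxe : ∀ k : ℕ, x * (r * s) ^ k = x := by
    intro k
    induction k with
    | zero => simp
    | succ k ih => rw [pow_succ, ← mul_assoc, ih, hxc]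
  have hrd : ∀ k : ℕ, r * (s * r) ^ k = (r * s) ^ k * r := by
    intro k
    induction k with
    | zero => simp
    | succ k ih =>
      rw [pow_succ, ← mul_assoc, ih, pow_succ]
      simp only [mul_assoc]
  have hsc : ∀ k : ℕ, s * (r * s) ^ k = (s * r) ^ k * s := by
    intro k
    induction k with
    | zero => simp
    | succ k ih =>
      rw [pow_succ, ← mul_assoc, ih, pow_succ]
      simp only [mul_assoc]
  have hhelp : (r * s) ^ (2 * N - 1) * (r * s) ^ N = (r * s) ^ (2 * N - 1) := by
    have h1 : 2 * N - 1 = (N - 1) + N := by omega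
    rw [h1, pow_add, mul_assoc, he]
  apply unit_of_relations x y ((r*s)^N) ((s*r)^N) ((r*s)^N * r) (s * (r*s)^(2*N-1))
    he hf
  -- hab
  · have h1 : r * s * (r * s) ^ (2 * N - 1) = (r * s) ^ (2 * N) := by
      rw [← pow_succ']; congr 1; omega
    have h2 : (r * s) ^ N * (r * s) ^ (2 * N) = (r * s) ^ (3 * N) := by
      rw [← pow_add]; congr 1; ring
    calc (r*s)^N * r * (s * (r*s)^(2*N-1))
        = (r*s)^N * (r * s * (r*s)^(2*N-1)) := by simp only [mul_assoc]
      _ = (r*s)^N * (r * s) ^ (2 * N) := by rw [h1]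
      _ = (r * s) ^ (3 * N) := h2
      _ = (r * s) ^ N := habs 3 (by omega)
  -- hba
  · have h1 : (r * s) ^ (2 * N - 1) * (r * s) ^ N = (r * s) ^ (3 * N - 1) := by
      rw [← pow_add]; congr 1; omega
    have h2 : (s * r) ^ (3 * N - 1) * (s * r) = (s * r) ^ (3 * N) := by
      rw [← pow_succ]; congr 1; omega
    calc s * (r*s)^(2*N-1) * ((r*s)^N * r)
        = s * ((r*s)^(2*N-1) * (r*s)^N) * r := by simp only [mul_assoc]
      _ = s * (r*s)^(3*N-1) * r := by rw [h1]
      _ = (s*r)^(3*N-1) * s * r := by rw [hsc]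
      _ = (s*r)^(3*N-1) * (s * r) := by rw [mul_assoc]
      _ = (s*r)^(3*N) := h2
      _ = (s*r)^N := habsd 3 (by omega)
  -- haf
  · calc (r*s)^N * r * (s*r)^N
        = (r*s)^N * (r * (s*r)^N) := by rw [mul_assoc]
      _ = (r*s)^N * ((r*s)^N * r) := by rw [hrd]
      _ = (r*s)^N * (r*s)^N * r := by rw [mul_assoc]
      _ = (r*s)^N * r := by rw [he]
  -- hbe
  · rw [mul_assoc, hhelp]
  -- hfb
  · calc (s*r)^N * (s * (r*s)^(2*N-1))
        = (s*r)^N * s * (r*s)^(2*N-1) := by rw [mul_assoc]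
      _ = s * (r*s)^N * (r*s)^(2*N-1) := by rw [← hsc]
      _ = s * ((r*s)^N * (r*s)^(2*N-1)) := by rw [mul_assoc]
      _ = s * ((r*s)^(2*N-1) * (r*s)^N) := by rw [← pow_add, ← pow_add, Nat.add_comm]
      _ = s * (r*s)^(2*N-1) := by rw [hhelp]
  -- hae
  · rw [← mul_assoc, he]
  -- hxe
  · exact hxe N
  -- hxa
  · rw [← mul_assoc, hxe, hr]


/-- greedy construction of a function with prescribed sums over a suitable family. -/
lemma greedy : ∀ (k : ℕ) (fam : Finset (Finset R)), fam.card ≤ k →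
    (∀ A ∈ fam, ∃ p ∈ A, ∀ B ∈ fam, p ∈ B → A ⊆ B) →
    ∀ (h : Finset R → ℚ), ∃ φ : R → ℚ, ∀ A ∈ fam, ∑ y ∈ A, φ y = h A := by
  intro k
  induction k with
  | zero =>
    intro fam hcard _ h
    have : fam = ∅ := Finset.card_eq_zero.1 (by omega)
    exact ⟨0, by simp [this]⟩
  | succ k ih =>
    intro fam hcard hfam h
    rcases Finset.eq_empty_or_nonempty fam with hfe | hfne
    · exact ⟨0, by simp [hfe]⟩
    obtain ⟨A₀, hA₀, hmax⟩ := Finset.exists_max_image fam Finset.card hfne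
    obtain ⟨p, hpA₀, hp⟩ := hfam A₀ hA₀
    have hpnot : ∀ B ∈ fam.erase A₀, p ∉ B := by
      intro B hB hpB
      have hBf := Finset.mem_of_mem_erase hB
      have hsub := hp B hBf hpB
      have := Finset.eq_of_subset_of_card_le hsub (hmax B hBf)
      exact Finset.ne_of_mem_erase hB this.symm
    have hcard' : (fam.erase A₀).card ≤ k := by
      have := Finset.card_erase_of_mem hA₀
      omega
    have hfam' : ∀ A ∈ fam.erase A₀, ∃ p ∈ A, ∀ B ∈ fam.erase A₀, p ∈ B → A ⊆ B := by
      intro A hA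
      obtain ⟨q, hq, hq'⟩ := hfam A (Finset.mem_of_mem_erase hA)
      exact ⟨q, hq, fun B hB hqB => hq' B (Finset.mem_of_mem_erase hB) hqB⟩
    obtain ⟨φ', hφ'⟩ := ih (fam.erase A₀) hcard' hfam' h
    refine ⟨fun z => φ' z + (if z = p then h A₀ - ∑ y ∈ A₀, φ' y else 0), ?_⟩
    intro A hA
    rcases eq_or_ne A A₀ with rfl | hne
    · rw [Finset.sum_add_distrib, Finset.sum_ite_eq' A p]
      simp only [hpA₀, if_true]
      ring
    · have hAe : A ∈ fam.erase A₀ := Finset.mem_erase.2 ⟨hne, hA⟩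
      rw [Finset.sum_add_distrib, Finset.sum_ite_eq' A p,
        if_neg (hpnot A hAe), add_zero]
      exact hφ' A hAe

/-- a rational linear system with a complex solution has a rational solution. -/
lemma rat_of_complex {ι : Type} [Fintype ι] [DecidableEq ι] (M : ι → ι → ℚ) (b : ι → ℚ)
    (h : ∃ z : ι → ℂ, ∀ x, ∑ r, (M x r : ℂ) * z r = (b x : ℂ)) :
    ∃ q : ι → ℚ, ∀ x, ∑ r, M x r * q r = b x := by
  obtain ⟨z, hz⟩ := h
  by_contra hq
  push_neg at hq
  let T : (ι → ℚ) →ₗ[ℚ] (ι → ℚ) :=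
  { toFun := fun q x => ∑ r, M x r * q r
    map_add' := by
      intro q₁ q₂; funext x
      simp [Pi.add_apply, mul_add, Finset.sum_add_distrib]
    map_smul' := by
      intro c q; funext x
      simp [Finset.mul_sum, mul_left_comm] }
  have hbW : b ∉ LinearMap.range T := by
    rintro ⟨q, hq'⟩
    obtain ⟨x, hx⟩ := hq q
    exact hx (congrFun hq' x)
  have hmk : (Submodule.Quotient.mk b : (ι → ℚ) ⧸ LinearMap.range T) ≠ 0 :=
    fun hc => hbW ((Submodule.Quotient.mk_eq_zero _).1 hc)
  have hdual : ¬ (∀ φ : Module.Dual ℚ ((ι → ℚ) ⧸ LinearMap.range T),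
      φ (Submodule.Quotient.mk b) = 0) := by
    rw [Module.forall_dual_apply_eq_zero_iff]
    exact hmk
  push_neg at hdual
  obtain ⟨φ, hφ⟩ := hdual
  set lam : (ι → ℚ) →ₗ[ℚ] ℚ := φ.comp (LinearMap.range T).mkQ with hlam
  have hlamT : ∀ q : ι → ℚ, lam (T q) = 0 := by
    intro q
    have : (LinearMap.range T).mkQ (T q) = 0 := by
      rw [Submodule.mkQ_apply, Submodule.Quotient.mk_eq_zero]
      exact ⟨q, rfl⟩
    rw [hlam, LinearMap.comp_apply, this, map_zero]
  have hlamb : lam b ≠ 0 := hφ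
  set l : ι → ℚ := fun i => lam (fun j => if i = j then 1 else 0) with hl
  have hrep : ∀ v : ι → ℚ, lam v = ∑ i, v i * l i := by
    intro v
    conv_lhs => rw [pi_eq_sum_univ v]
    rw [map_sum]
    apply Finset.sum_congr rfl
    intro i _
    rw [map_smul, smul_eq_mul]
  have hcol : ∀ r : ι, ∑ x, M x r * l x = 0 := by
    intro r
    have h1 : T (fun j => if r = j then 1 else 0) = fun x => M x r := by
      funext x
      simp only [T, LinearMap.coe_mk, AddHom.coe_mk]
      rw [Finset.sum_congr rfl (fun j _ => by
        rw [show (if r = j then (1:ℚ) else 0) = (if j = r then (1:ℚ) else 0) by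
          simp [eq_comm]]), ]
      rw [show (fun j => M x j * if j = r then (1:ℚ) else 0) = fun j =>
        if j = r then M x j else 0 from funext fun j => by split <;> simp]
      rw [Finset.sum_ite_eq' Finset.univ r (fun j => M x j)]
      simp
    have := hlamT (fun j => if r = j then 1 else 0)
    rw [h1, hrep] at this
    exact this
  -- contradiction via the complex solution
  have hC : ((∑ i, b i * l i : ℚ) : ℂ) = 0 := by
    push_cast
    calc ∑ i, (b i : ℂ) * (l i : ℂ)
        = ∑ i, (∑ r, (M i r : ℂ) * z r) * (l i : ℂ) := by
          apply Finset.sum_congr rfl; intro i _; rw [hz i]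
      _ = ∑ i, ∑ r, (M i r : ℂ) * z r * (l i : ℂ) := by
          apply Finset.sum_congr rfl; intro i _; rw [Finset.sum_mul]
      _ = ∑ r, ∑ i, (M i r : ℂ) * z r * (l i : ℂ) := Finset.sum_comm
      _ = ∑ r, (∑ i, (M i r : ℂ) * (l i : ℂ)) * z r := by
          apply Finset.sum_congr rfl; intro r _
          rw [Finset.sum_mul]
          apply Finset.sum_congr rfl; intro i _; ring
      _ = 0 := by
          apply Finset.sum_eq_zero; intro r _
          have := hcol r
          have hc : ((∑ x, M x r * l x : ℚ) : ℂ) = 0 := by rw [this]; norm_num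
          push_cast at hc
          rw [hc, zero_mul]
  have : lam b = 0 := by
    have := hC
    rw [hrep b]
    exact_mod_cast this
  exact hlamb this


lemma main (R : Type) [Ring R] [Fintype R] [DecidableEq R]
    (hFrob : IsFrobenius R) (g : R → ℚ) (hg0 : g 0 = 0)
    (hginv : ∀ (x : R) (u : Rˣ), g (x * (u : R)) = g x) :
    ∃ f : R → ℚ, ∀ x : R,
      (∑ r : R, (if r * x = 0 then (0 : ℚ) else 1) * f r) = g x := by
  classical
  obtain ⟨χ, hχ⟩ := hFrob
  set n := Fintype.card R with hn
  have hnpos : 0 < n := Fintype.card_pos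
  have hnC : (n : ℂ) ≠ 0 := Nat.cast_ne_zero.2 hnpos.ne'
  -- left nondegeneracy from uniqueness
  have P1 : ∀ w : R, (∀ s : R, χ (w * s) = 1) → w = 0 := by
    intro w hw
    obtain ⟨r₀, hr₀, huniq⟩ := hχ 1
    have h1 : w = r₀ := huniq w (fun x => by rw [hw x, AddChar.one_apply])
    have h2 : (0 : R) = r₀ := huniq 0 (fun x => by
      rw [zero_mul, AddChar.map_zero_eq_one, AddChar.one_apply])
    rw [h1, ← h2]
  -- separation of points by characters
  have sep : ∀ w : R, w ≠ 0 → ∃ ψ : AddChar R ℂ, ψ w ≠ 1 := by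
    intro w hw
    have hexp : 0 < Monoid.exponent (Multiplicative R) :=
      Monoid.ExponentExists.of_finite.exponent_pos
    haveI : NeZero ((Monoid.exponent (Multiplicative R) : ℕ) : ℂ) :=
      ⟨Nat.cast_ne_zero.2 hexp.ne'⟩
    have ha : (Multiplicative.ofAdd w) ≠ (1 : Multiplicative R) := by simpa using hw
    obtain ⟨φm, hφm⟩ :=
      CommGroup.exists_apply_ne_one_of_hasEnoughRootsOfUnity (Multiplicative R) ℂ ha
    refine ⟨AddChar.toMonoidHomEquiv.symm ((Units.coeHom ℂ).comp φm), ?_⟩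
    rw [AddChar.toMonoidHomEquiv_symm_apply]
    intro hcon
    exact hφm (Units.ext (by simpa using hcon))
  -- right nondegeneracy from surjectivity
  have P2 : ∀ w : R, (∀ r : R, χ (r * w) = 1) → w = 0 := by
    intro w hw
    by_contra hwne
    obtain ⟨ψ, hψ⟩ := sep w hwne
    obtain ⟨r, hr, -⟩ := hχ ψ
    exact hψ (by rw [hr w, hw r])
  -- the two delta identities
  have D1 : ∀ w : R, (∑ s : R, χ (w * s)) = if w = 0 then (n : ℂ) else 0 := by
    intro w
    split
    · next hw => subst hw; simp [AddChar.map_zero_eq_one, hn]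
    · next hw =>
      have hne : χ.compAddMonoidHom (AddMonoidHom.mulLeft w) ≠ 1 := by
        rw [AddChar.ne_one_iff]
        by_contra hcon
        push_neg at hcon
        exact hw (P1 w (fun s => by simpa using hcon s))
      have := AddChar.sum_eq_zero_of_ne_one hne
      simpa using this
  have D2 : ∀ w : R, (∑ r : R, χ (r * w)) = if w = 0 then (n : ℂ) else 0 := by
    intro w
    split
    · next hw => subst hw; simp [AddChar.map_zero_eq_one, hn]
    · next hw =>
      have hne : χ.compAddMonoidHom (AddMonoidHom.mulRight w) ≠ 1 := by
        rw [AddChar.ne_one_iff]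
        by_contra hcon
        push_neg at hcon
        exact hw (P2 w (fun r => by simpa using hcon r))
      have := AddChar.sum_eq_zero_of_ne_one hne
      simpa using this
  -- g is constant on generators of the same principal right ideal
  have gconst : ∀ x x' : R, rid x = rid x' → g x' = g x := by
    intro x x' h
    obtain ⟨u, hu⟩ := unit_of_rid_eq x x' h
    rw [hu, hginv]
  -- construct φ by the greedy method
  have hfam : ∀ A ∈ Finset.image (fun x : R => rid x) univ,
      ∃ p ∈ A, ∀ B ∈ Finset.image (fun x : R => rid x) univ, p ∈ B → A ⊆ B := by
    intro A hA
    obtain ⟨x, -, rfl⟩ := Finset.mem_image.1 hA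
    refine ⟨x, self_mem_rid x, ?_⟩
    intro B hB hxB
    obtain ⟨z, -, rfl⟩ := Finset.mem_image.1 hB
    exact rid_subset_of_mem hxB
  obtain ⟨φ, hφ⟩ := greedy (Finset.image (fun x : R => rid x) univ).card
    (Finset.image (fun x : R => rid x) univ) le_rfl hfam
    (fun A => if hA : ∃ x : R, rid x = A then -(A.card : ℚ) * g hA.choose else 0)
  have key : ∀ x : R, ∑ y ∈ rid x, φ y = -(((rid x).card : ℚ)) * g x := by
    intro x
    have hmem : rid x ∈ Finset.image (fun x : R => rid x) univ :=
      Finset.mem_image.2 ⟨x, mem_univ x, rfl⟩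
    have hval := hφ (rid x) hmem
    rw [dif_pos ⟨x, rfl⟩] at hval
    rw [hval, gconst x _ (⟨x, rfl⟩ : ∃ x' : R, rid x' = rid x).choose_spec.symm]
  -- fiber counting : ∑_s φ (x * s) = - n * g x
  have fiber : ∀ x : R, ∑ s : R, φ (x * s) = -((n : ℚ)) * g x := by
    intro x
    set k := (univ.filter (fun s : R => x * s = 0)).card with hk
    have hfib : ∀ y ∈ rid x, (univ.filter (fun s : R => x * s = y)).card = k := by
      intro y hy
      obtain ⟨s₀, hs₀⟩ := mem_rid.1 hy
      rw [hk]
      apply Finset.card_bij' (fun s _ => s - s₀) (fun t _ => t + s₀)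
      · intro s hs
        rw [Finset.mem_filter] at hs ⊢
        refine ⟨mem_univ _, ?_⟩
        rw [mul_sub, hs.2, hs₀, sub_self]
      · intro t ht
        rw [Finset.mem_filter] at ht ⊢
        refine ⟨mem_univ _, ?_⟩
        rw [mul_add, ht.2, hs₀, zero_add]
      · intro s _; rw [sub_add_cancel]
      · intro t _; rw [add_sub_cancel_right]
    have himg : Finset.image (fun s : R => x * s) univ = rid x := rfl
    have hcomp := Finset.sum_comp (s := (univ : Finset R)) φ (fun s : R => x * s)
    rw [himg] at hcomp
    have hsum2 : ∑ y ∈ rid x, ((univ.filter (fun s : R => x * s = y)).card) • φ y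
        = k • ∑ y ∈ rid x, φ y := by
      rw [Finset.smul_sum]
      exact Finset.sum_congr rfl fun y hy => by rw [hfib y hy]
    have hcount : n = (rid x).card * k := by
      have := Finset.card_eq_sum_card_fiberwise
        (f := fun s : R => x * s) (s := (univ : Finset R)) (t := rid x)
        (fun s _ => mem_rid.2 ⟨s, rfl⟩)
      rw [Finset.sum_congr rfl (fun y hy => hfib y hy), Finset.sum_const, smul_eq_mul] at this
      rw [hn, ← Finset.card_univ]
      exact this
    rw [hcomp, hsum2, key x, nsmul_eq_mul]
    have : ((k : ℚ)) * (-(((rid x).card : ℚ)) * g x)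
        = -((((rid x).card * k : ℕ) : ℚ)) * g x := by push_cast; ring
    rw [this, ← hcount]
  -- the complex solution
  set fC : R → ℂ := fun r => (∑ y : R, (φ y : ℚ) * χ (-(r * y))) / n with hfC
  have claim1 : ∀ t : R, ∑ r : R, fC r * χ (r * t) = ((φ t : ℚ) : ℂ) := by
    intro t
    calc ∑ r : R, fC r * χ (r * t)
        = (∑ r : R, ∑ y : R, ((φ y : ℚ) : ℂ) * (χ (-(r * y)) * χ (r * t))) / n := by
          rw [Finset.sum_div]
          refine Finset.sum_congr rfl fun r _ => ?_
          rw [hfC, div_mul_eq_mul_div, Finset.sum_mul]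
          congr 1
          exact Finset.sum_congr rfl fun y _ => by rw [mul_assoc]
      _ = (∑ y : R, ((φ y : ℚ) : ℂ) * ∑ r : R, χ (r * (t - y))) / n := by
          congr 1
          rw [Finset.sum_comm]
          refine Finset.sum_congr rfl fun y _ => ?_
          rw [Finset.mul_sum]
          refine Finset.sum_congr rfl fun r _ => ?_
          congr 1
          have harg : r * (t - y) = -(r * y) + r * t := by
            rw [mul_sub, sub_eq_neg_add]
          rw [harg, AddChar.map_add_eq_mul]
      _ = (∑ y : R, if y = t then ((φ y : ℚ) : ℂ) * n else 0) / n := by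
          congr 1
          refine Finset.sum_congr rfl fun y _ => ?_
          rw [D2 (t - y)]
          rcases eq_or_ne y t with rfl | hne
          · rw [if_pos (sub_self y), if_pos rfl]
          · rw [if_neg (fun hc => hne (sub_eq_zero.1 hc).symm), if_neg hne, mul_zero]
      _ = ((φ t : ℚ) : ℂ) := by
          rw [Finset.sum_ite_eq' univ t, if_pos (mem_univ t), mul_div_assoc,
            div_self hnC, mul_one]
  have claim2 : ∀ x : R, ∑ r : R,
      (if r * x = 0 then (0 : ℂ) else 1) * fC r = ((g x : ℚ) : ℂ) := by
    intro x
    have hsplit : ∀ r : R, (if r * x = 0 then (0 : ℂ) else 1) * fC r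
        = fC r - (if r * x = 0 then (1 : ℂ) else 0) * fC r := by
      intro r
      split <;> ring
    rw [Finset.sum_congr rfl fun r _ => hsplit r, Finset.sum_sub_distrib]
    have hφ0 : φ 0 = 0 := by
        have := key 0
        have hrid0 : rid (0 : R) = {0} := by
          ext y
          rw [mem_rid, Finset.mem_singleton]
          constructor
          · rintro ⟨t, ht⟩; rw [← ht, zero_mul]
          · rintro rfl; exact ⟨0, zero_mul 0⟩
        rw [hrid0, Finset.sum_singleton, hg0] at this
        simpa using this
    have hs1 : ∑ r : R, fC r = 0 := by
      calc ∑ r : R, fC r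
          = ∑ r : R, fC r * χ (r * 0) := by
            refine Finset.sum_congr rfl fun r _ => ?_
            rw [mul_zero, AddChar.map_zero_eq_one, mul_one]
        _ = ((φ 0 : ℚ) : ℂ) := claim1 0
        _ = 0 := by rw [hφ0]; norm_num
    rw [hs1, zero_sub]
    have hs2 : ∑ r : R, (if r * x = 0 then (1 : ℂ) else 0) * fC r = -((g x : ℚ) : ℂ) := by
      calc ∑ r : R, (if r * x = 0 then (1 : ℂ) else 0) * fC r
          = ∑ r : R, ((∑ s : R, χ ((r * x) * s)) / n) * fC r := by
            refine Finset.sum_congr rfl fun r _ => ?_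
            rw [D1 (r * x)]
            split
            · rw [div_self hnC]
            · rw [zero_div]
        _ = (∑ r : R, ∑ s : R, fC r * χ (r * (x * s))) / n := by
            rw [Finset.sum_div]
            refine Finset.sum_congr rfl fun r _ => ?_
            rw [div_mul_eq_mul_div, Finset.sum_mul]
            congr 1
            refine Finset.sum_congr rfl fun s _ => ?_
            rw [mul_comm (χ (r * x * s)) (fC r), mul_assoc r x s]
        _ = (∑ s : R, ∑ r : R, fC r * χ (r * (x * s))) / n := by
            rw [Finset.sum_comm]
        _ = (∑ s : R, ((φ (x * s) : ℚ) : ℂ)) / n := by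
            congr 1
            exact Finset.sum_congr rfl fun s _ => claim1 (x * s)
        _ = -((g x : ℚ) : ℂ) := by
            have hc : (∑ s : R, ((φ (x * s) : ℚ) : ℂ)) = -(n : ℂ) * ((g x : ℚ) : ℂ) := by
              calc ∑ s : R, ((φ (x * s) : ℚ) : ℂ)
                  = ((∑ s : R, φ (x * s) : ℚ) : ℂ) := by push_cast; rfl
                _ = ((-(n : ℚ) * g x : ℚ) : ℂ) := by rw [fiber x]
                _ = -(n : ℂ) * ((g x : ℚ) : ℂ) := by push_cast; ring
            rw [hc, neg_mul, neg_div, mul_comm, mul_div_assoc, div_self hnC, mul_one]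
    rw [hs2, neg_neg]
  -- transfer to ℚ
  have := rat_of_complex (fun x r => if r * x = 0 then (0 : ℚ) else 1) g ?_
  · obtain ⟨q, hq⟩ := this
    exact ⟨q, hq⟩
  · refine ⟨fC, fun x => ?_⟩
    rw [← claim2 x]
    refine Finset.sum_congr rfl fun r _ => ?_
    simp only [apply_ite (Rat.cast : ℚ → ℂ), Rat.cast_zero, Rat.cast_one]

end Stmt19

/-- over a finite Frobenius ring, every right-invariant function
`g : R → ℚ` with `g 0 = 0` is a right correlation of the Hamming weight:
there is `f : R → ℚ` with `∑_{r ∈ R} w_H(rx)·f(r) = g(x)` for all `x`. -/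
theorem stmt19 (R : Type) [Ring R] [Fintype R] [DecidableEq R]
    (hFrob : IsFrobenius R) (g : R → ℚ) (hg0 : g 0 = 0)
    (hginv : ∀ (x : R) (u : Rˣ), g (x * (u : R)) = g x) :
    ∃ f : R → ℚ, ∀ x : R,
      (∑ r : R, (if r * x = 0 then (0 : ℚ) else 1) * f r) = g x :=
  Stmt19.main R hFrob g hg0 hginv
end
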